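/- Let (Y, D) be a 1-cell with Y ≠ ∅, and let {a, b} ⊆ D be the unique pair of distinct colors with min_a Y = min_b Y. Then for i ∈ D, the set Y is dominant with respect to D \ {i} if and only if i ∈ {a, b} and the set M_i = { y ∈ T : min_k Y <_k y for all k ∈ D \ {i} } is empty. -/
import Mathlib


/-- `X ⊆ T` is dominant with respect to `C ⊆ I` (for the family of linear orders `o`)
if either `X = ∅`, or `X ≠ ∅` and there is no `y : T` with `min_i X <_i y` for all `i ∈ C`. -/
def Dominant {T I : Type*} (o : I → LinearOrder T) (X : Finset T) (C : Finset I) : Prop :=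
  ∀ hX : X.Nonempty, ¬ ∃ y : T, ∀ i ∈ C, (o i).lt (@Finset.min' T (o i) X hX) y

/-- A pair `(X, C)` is a cell if `C ≠ ∅`, `X` is dominant with respect to `C`,
and `|C \ c(X)| ≤ 1`. -/
def IsCell {T I : Type*} [DecidableEq T] [DecidableEq I]
    (o : I → LinearOrder T) (c : T → I) (X : Finset T) (C : Finset I) : Prop :=
  C.Nonempty ∧ Dominant o X C ∧ (C \ X.image c).card ≤ 1

/-- A 0-cell is a cell `(X, C)` with `|C| = |X|`. -/
def IsZeroCell {T I : Type*} [DecidableEq T] [DecidableEq I]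
    (o : I → LinearOrder T) (c : T → I) (X : Finset T) (C : Finset I) : Prop :=
  IsCell o c X C ∧ C.card = X.card

/-- A 1-cell is a cell `(X, C)` with `|C| = |X| + 1`. -/
def IsOneCell {T I : Type*} [DecidableEq T] [DecidableEq I]
    (o : I → LinearOrder T) (c : T → I) (X : Finset T) (C : Finset I) : Prop :=
  IsCell o c X C ∧ C.card = X.card + 1

/-- A 1-cell `(Y, D)` is a face of a 0-cell `(X, C)` if either `D = C` and
`Y = X \ {x}` for some `x ∈ X`, or `Y = X` and `D = C ∪ {i}` for some `i ∉ C`. -/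
def IsFace {T I : Type*} [DecidableEq T] [DecidableEq I]
    (o : I → LinearOrder T) (c : T → I)
    (Y : Finset T) (D : Finset I) (X : Finset T) (C : Finset I) : Prop :=
  IsOneCell o c Y D ∧ IsZeroCell o c X C ∧
    ((D = C ∧ ∃ x ∈ X, Y = X.erase x) ∨ (Y = X ∧ ∃ i, i ∉ C ∧ D = insert i C))

/-- Let `(Y, D)` be a 1-cell with `Y ≠ ∅`, and let `a ≠ b` in `D` be the unique pair
with `min_a Y = min_b Y`. Then for `i ∈ D`, the set `Y` is dominant with respect to
`D \ {i}` if and only if `i ∈ {a, b}` and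
`M_i = { y ∈ T : min_k Y <_k y for all k ∈ D \ {i} }` is empty. -/
theorem stmt11 {T I : Type*} [Fintype T] [Fintype I] [Nonempty T] [Nonempty I]
    [DecidableEq T] [DecidableEq I] (o : I → LinearOrder T) (c : T → I)
    (Y : Finset T) (D : Finset I) (h1 : IsOneCell o c Y D) (hY : Y.Nonempty)
    (a b : I) (ha : a ∈ D) (hb : b ∈ D) (hab : a ≠ b)
    (hmin : @Finset.min' T (o a) Y hY = @Finset.min' T (o b) Y hY) :
    ∀ i ∈ D, (Dominant o Y (D.erase i) ↔
      ((i = a ∨ i = b) ∧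
        {y : T | ∀ k ∈ D.erase i, (o k).lt (@Finset.min' T (o k) Y hY) y} = ∅)) := by

  obtain ⟨⟨hDne, hdom, hcard1⟩, hcard⟩ := h1
  set g : I → T := fun k => @Finset.min' T (o k) Y hY with hg
  have hgmem : ∀ k, g k ∈ Y := fun k => @Finset.min'_mem T (o k) Y hY
  have hsurj : ∀ x ∈ Y, ∃ k ∈ D, g k = x := by
    intro x hx
    by_contra hcon
    push_neg at hcon
    exact hdom hY ⟨x, fun k hk => @lt_of_le_of_ne T (o k).toPartialOrder _ _
      (@Finset.min'_le T (o k) Y x hx) (hcon k hk)⟩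
  have himg : (D.erase a).image g = Y := by
    apply Finset.Subset.antisymm
    · intro x hx
      obtain ⟨k, hk, rfl⟩ := Finset.mem_image.mp hx
      exact hgmem k
    · intro x hx
      obtain ⟨k, hk, rfl⟩ := hsurj x hx
      rcases eq_or_ne k a with rfl | hka
      · exact Finset.mem_image.mpr ⟨b, Finset.mem_erase.mpr ⟨hab.symm, hb⟩, hmin.symm⟩
      · exact Finset.mem_image.mpr ⟨k, Finset.mem_erase.mpr ⟨hka, hk⟩, rfl⟩
  have hinj : Set.InjOn g (D.erase a) := by
    apply Finset.injOn_of_card_image_eq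
    rw [himg, Finset.card_erase_of_mem ha, hcard]
    simp
  intro i hi
  constructor
  · intro hDomi
    have hM : {y : T | ∀ k ∈ D.erase i, (o k).lt (@Finset.min' T (o k) Y hY) y} = ∅ := by
      ext y
      simp only [Set.mem_setOf_eq, Set.mem_empty_iff_false, iff_false]
      intro hy
      exact hDomi hY ⟨y, hy⟩
    refine ⟨?_, hM⟩
    by_contra hiab
    push_neg at hiab
    obtain ⟨hia, hib⟩ := hiab
    have hmemM : g i ∈ ({y : T | ∀ k ∈ D.erase i,
        (o k).lt (@Finset.min' T (o k) Y hY) y} : Set T) := by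
      intro k hk
      obtain ⟨hki, hkD⟩ := Finset.mem_erase.mp hk
      have hle : (o k).le (g k) (g i) := @Finset.min'_le T (o k) Y (g i) (hgmem i)
      have hne : g k ≠ g i := by
        intro heq
        rcases eq_or_ne k a with rfl | hka
        · exact hib (hinj (Finset.mem_coe.mpr (Finset.mem_erase.mpr ⟨hia, hi⟩))
            (Finset.mem_coe.mpr (Finset.mem_erase.mpr ⟨hab.symm, hb⟩))
            (heq.symm.trans hmin))
        · exact hki (hinj (Finset.mem_coe.mpr (Finset.mem_erase.mpr ⟨hka, hkD⟩))
            (Finset.mem_coe.mpr (Finset.mem_erase.mpr ⟨hia, hi⟩)) heq)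
      exact @lt_of_le_of_ne T (o k).toPartialOrder _ _ hle hne
    rw [hM] at hmemM
    exact hmemM
  · rintro ⟨-, hM⟩ hX ⟨y, hy⟩
    have hy' : y ∈ {y : T | ∀ k ∈ D.erase i, (o k).lt (@Finset.min' T (o k) Y hY) y} := hy
    rw [hM] at hy'
    exact hy'
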